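/- Let N ≥ 2 and let P be a real N × N diagonal matrix with positive diagonal entries, Q a real N × N matrix satisfying the summation-by-parts relation Q + Qᵀ = E, where E is the N × N matrix whose only nonzero entries are E_{NN} = 1 and E_{11} = −1, and set D = P⁻¹ Q. Suppose u : ℝ → ℝ^N is differentiable and satisfies the semi-discrete split-form viscous Burgers scheme du/dt + (1/3) D (u ∘ u) + (1/3) u ∘ (D u) = D (D u), where ∘ is the entrywise product. Then for every t, (d/dt) [ (1/2) u(t)ᵀ P u(t) ] + (1/3) ( u_N(t)³ − u_1(t)³ ) = u(t)ᵀ E (D u(t)) − (D u(t))ᵀ P (D u(t)). -/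

import Mathlib

open Matrix

/-- Discrete energy (entropy) identity for the semi-discrete split-form viscous Burgers
scheme built from a diagonal-norm summation-by-parts operator D = P⁻¹ Q with
Q + Qᵀ = E = e_N e_Nᵀ − e_1 e_1ᵀ.  Here the number of nodes is N = n + 2 ≥ 2. -/
theorem sbp_burgers_energy_identity
    (n : ℕ)
    (dP : Fin (n + 2) → ℝ) (hdP : ∀ i, 0 < dP i)
    (P : Matrix (Fin (n + 2)) (Fin (n + 2)) ℝ) (hP : P = Matrix.diagonal dP)
    (Q E D : Matrix (Fin (n + 2)) (Fin (n + 2)) ℝ)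
    (hE : E = Matrix.single (Fin.last (n + 1)) (Fin.last (n + 1)) (1 : ℝ)
            - Matrix.single 0 0 (1 : ℝ))
    (hQ : Q + Qᵀ = E)
    (hD : D = P⁻¹ * Q)
    (u : ℝ → Fin (n + 2) → ℝ) (hu : Differentiable ℝ u)
    (hscheme : ∀ t, deriv u t + (1 / 3 : ℝ) • (D *ᵥ (u t * u t))
        + (1 / 3 : ℝ) • (u t * (D *ᵥ u t)) = D *ᵥ (D *ᵥ u t))
    (t : ℝ) :
    deriv (fun s => (1 / 2 : ℝ) * (u s ⬝ᵥ (P *ᵥ u s))) t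
      + (1 / 3 : ℝ) * ((u t (Fin.last (n + 1))) ^ 3 - (u t 0) ^ 3)
      = u t ⬝ᵥ (E *ᵥ (D *ᵥ u t)) - (D *ᵥ u t) ⬝ᵥ (P *ᵥ (D *ᵥ u t)) := by
  -- P is invertible, so P * D = Q
  have hdet : IsUnit P.det := by
    rw [hP, Matrix.det_diagonal]
    exact (Finset.prod_pos (fun i _ => hdP i)).ne'.isUnit
  have hPD : P * D = Q := by
    rw [hD, ← Matrix.mul_assoc, Matrix.mul_nonsing_inv P hdet, Matrix.one_mul]
  have hPDv : ∀ v, P *ᵥ (D *ᵥ v) = Q *ᵥ v := by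
    intro v; rw [Matrix.mulVec_mulVec, hPD]
  -- SBP property at the level of bilinear forms
  have hsbp : ∀ v w : Fin (n + 2) → ℝ,
      v ⬝ᵥ (Q *ᵥ w) + w ⬝ᵥ (Q *ᵥ v) = v ⬝ᵥ (E *ᵥ w) := by
    intro v w
    have h1 : w ⬝ᵥ (Q *ᵥ v) = v ⬝ᵥ (Qᵀ *ᵥ w) := by
      rw [Matrix.mulVec_transpose, Matrix.dotProduct_mulVec]
      exact dotProduct_comm _ _
    rw [h1, ← dotProduct_add, ← Matrix.add_mulVec, hQ]
  -- boundary evaluation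
  have hstd : ∀ (a : Fin (n + 2)) (w v : Fin (n + 2) → ℝ),
      w ⬝ᵥ (Matrix.single a a (1 : ℝ) *ᵥ v) = w a * v a := by
    intro a w v
    rw [Matrix.single_mulVec]
    show w ⬝ᵥ Pi.single a (1 * v a) = _
    rw [dotProduct_single]; ring
  have hbd : u t ⬝ᵥ (E *ᵥ (u t * u t)) = (u t (Fin.last (n + 1))) ^ 3 - (u t 0) ^ 3 := by
    rw [hE, Matrix.sub_mulVec, dotProduct_sub, hstd, hstd]
    simp [Pi.mul_apply]; ring
  -- derivative of the discrete energy
  set w : Fin (n + 2) → ℝ := deriv u t with hwdef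
  have hw : HasDerivAt u w t := (hu t).hasDerivAt
  have hi : ∀ i, HasDerivAt (fun s => u s i) (w i) t := fun i => hasDerivAt_pi.mp hw i
  have hfun : ∀ s, (1 / 2 : ℝ) * (u s ⬝ᵥ (P *ᵥ u s))
      = ∑ i, (1 / 2 : ℝ) * (u s i * (dP i * u s i)) := by
    intro s
    rw [hP]
    simp only [dotProduct, Matrix.mulVec_diagonal, Finset.mul_sum]
  have hD2 : HasDerivAt (fun s => ∑ i, (1 / 2 : ℝ) * (u s i * (dP i * u s i)))
      (∑ i, (1 / 2 : ℝ) * (w i * (dP i * u t i) + u t i * (dP i * w i))) t :=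
    HasDerivAt.fun_sum fun i _ => ((hi i).mul ((hi i).const_mul (dP i))).const_mul _
  have hEderiv : deriv (fun s => (1 / 2 : ℝ) * (u s ⬝ᵥ (P *ᵥ u s))) t
      = u t ⬝ᵥ (P *ᵥ w) := by
    have h1 : deriv (fun s => (1 / 2 : ℝ) * (u s ⬝ᵥ (P *ᵥ u s))) t
        = ∑ i, (1 / 2 : ℝ) * (w i * (dP i * u t i) + u t i * (dP i * w i)) := by
      simp only [hfun]; exact hD2.deriv
    rw [h1, hP]
    simp only [dotProduct, Matrix.mulVec_diagonal]
    exact Finset.sum_congr rfl fun i _ => by ring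
  -- rewrite the scheme
  have hw_eq : w = D *ᵥ (D *ᵥ u t) - (1 / 3 : ℝ) • (D *ᵥ (u t * u t))
      - (1 / 3 : ℝ) • (u t * (D *ᵥ u t)) := by
    rw [← hscheme t]; abel
  -- key dot product identities
  have hA : u t ⬝ᵥ (Q *ᵥ (D *ᵥ u t))
      = u t ⬝ᵥ (E *ᵥ (D *ᵥ u t)) - (D *ᵥ u t) ⬝ᵥ (P *ᵥ (D *ᵥ u t)) := by
    have := hsbp (u t) (D *ᵥ u t)
    rw [hPDv (u t)] at *
    linarith [this]
  have hQu : ∀ i, (Q *ᵥ u t) i = dP i * (D *ᵥ u t) i := by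
    intro i
    rw [← hPDv (u t), hP, Matrix.mulVec_diagonal]
  have hC : u t ⬝ᵥ (P *ᵥ (u t * (D *ᵥ u t))) = (u t * u t) ⬝ᵥ (Q *ᵥ u t) := by
    rw [hP]
    simp only [dotProduct, Matrix.mulVec_diagonal, Pi.mul_apply]
    refine Finset.sum_congr rfl fun i _ => ?_
    rw [hQu i]; ring
  have hB : u t ⬝ᵥ (Q *ᵥ (u t * u t)) + (u t * u t) ⬝ᵥ (Q *ᵥ u t)
      = (u t (Fin.last (n + 1))) ^ 3 - (u t 0) ^ 3 := by
    rw [hsbp (u t) (u t * u t), hbd]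
  -- put everything together
  rw [hEderiv, hw_eq]
  rw [Matrix.mulVec_sub, Matrix.mulVec_sub, Matrix.mulVec_smul, Matrix.mulVec_smul,
    dotProduct_sub, dotProduct_sub, dotProduct_smul,
    dotProduct_smul, hPDv (D *ᵥ u t), hPDv (u t * u t), smul_eq_mul, smul_eq_mul,
    hA, hC]
  linarith [hB]
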